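/- Let p be an odd prime, λ = (λ₁ > λ₂ > … > λ_k ≥ 1) a partition with multiplicities ρ₁, …, ρ_k ≥ 1, A_λ = ⊕_{i=1}^{k} (ℤ/p^{λ_i}ℤ)^{ρ_i} the associated finite abelian p-group, and G_λ = Aut(A_λ). Then H²(G_λ, A_λ) = 0 for the natural action of G_λ on A_λ. Moreover, for p = 2, H²(G_λ, A_λ) with the natural action is a finite abelian group annihilated by 4. -/

import Mathlib

/-- The multiplicative group structure on `AddAut A` that Mathlib had in the older version
(multiplication is composition); Mathlib now makes `AddAut A` an additive group instead. -/
instance AddAut.oldGroup (A : Type) [AddCommGroup A] : Group (AddAut A) where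
  mul g h := AddEquiv.trans h g
  one := AddEquiv.refl _
  inv := AddEquiv.symm
  mul_assoc _ _ _ := rfl
  one_mul _ := rfl
  mul_one _ := rfl
  inv_mul_cancel := AddEquiv.self_trans_symm

/-- The natural representation of `G = Aut(A)` on the abelian group `A`, given by
`g · a = g(a)`. -/
noncomputable def natRep (A : Type) [AddCommGroup A] : Representation ℤ (AddAut A) A where
  toFun g := AddMonoidHom.toIntLinearMap (AddEquiv.toAddMonoidHom g)
  map_one' := by ext a; rfl
  map_mul' g h := by ext a; rfl

/-- The finite abelian `p`-group `A_λ = ⊕_{i=1}^{k} (ℤ/p^{λ_i}ℤ)^{ρ_i}` associated to a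
partition `λ` with multiplicities `ρ`. -/
abbrev abelianPGroupOfPartition (p k : ℕ) (lam rho : Fin k → ℕ) : Type :=
  (i : Fin k) → Fin (rho i) → ZMod (p ^ lam i)

open groupCohomology

/-- Componentwise halving makes doubling an automorphism. -/
noncomputable def doublingAut (p k : ℕ) (lam rho : Fin k → ℕ)
    (hu : ∀ i, IsUnit (2 : ZMod (p ^ lam i))) :
    AddAut (abelianPGroupOfPartition p k lam rho) where
  toFun a := a + a
  invFun a := fun i j => (2 : ZMod (p ^ lam i))⁻¹ * a i j
  left_inv a := by
    funext i j
    show (2 : ZMod (p ^ lam i))⁻¹ * (a i j + a i j) = a i j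
    rw [← two_mul, ← mul_assoc, ZMod.inv_mul_of_unit _ (hu i), one_mul]
  right_inv a := by
    funext i j
    show (2 : ZMod (p ^ lam i))⁻¹ * a i j + (2 : ZMod (p ^ lam i))⁻¹ * a i j = a i j
    rw [← two_mul, ← mul_assoc, ZMod.mul_inv_of_unit _ (hu i), one_mul]
  map_add' a b := by funext i j; show (a + b) i j + (a + b) i j = _; simp; abel

/-- Negation as an automorphism. -/
def negAut (M : Type) [AddCommGroup M] : AddAut M where
  toFun a := -a
  invFun a := -a
  left_inv := neg_neg
  right_inv := neg_neg
  map_add' := neg_add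

/-- Key lemma: for a central automorphism `g`, `g ∘ f - f` is a coboundary, explicitly. -/
lemma central_key {M : Type} [AddCommGroup M] (g : AddAut M)
    (hg : ∀ h : AddAut M, g * h = h * g)
    (f : cocycles₂ (Rep.of (natRep M))) (x y : AddAut M) :
    (Rep.of (natRep M)).ρ x (f.1 (g, y) - f.1 (y, g))
      - (f.1 (g, x * y) - f.1 (x * y, g))
      + (f.1 (g, x) - f.1 (x, g))
      = (Rep.of (natRep M)).ρ g (f.1 (x, y)) - f.1 (x, y) := by
  have C := (mem_cocycles₂_def f.1).1 f.2
  have h1 := C x g y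
  have h2 := C x y g
  have h3 := C g x y
  rw [← hg x, hg y] at h1
  have e1 : (Rep.of (natRep M)).ρ x (f.1 (g, y))
      = f.1 (g * x, y) - f.1 (x, y * g) + f.1 (x, g) := by
    rw [← sub_eq_zero, ← h1]; abel
  have e2 : (Rep.of (natRep M)).ρ x (f.1 (y, g))
      = f.1 (x * y, g) - f.1 (x, y * g) + f.1 (x, y) := by
    rw [← sub_eq_zero, ← h2]; abel
  have e3 : (Rep.of (natRep M)).ρ g (f.1 (x, y))
      = f.1 (g * x, y) - f.1 (g, x * y) + f.1 (g, x) := by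
    rw [← sub_eq_zero, ← h3]; abel
  rw [map_sub, e1, e2, e3]
  abel

/-- For a partition `λ₁ > … > λ_k ≥ 1` with multiplicities `ρᵢ ≥ 1`,
`A_λ = ⊕ (ℤ/p^{λᵢ}ℤ)^{ρᵢ}` and `G_λ = Aut(A_λ)` acting naturally: if `p` is an odd prime
then `H²(G_λ, A_λ) = 0`; and if `p = 2` then `H²(G_λ, A_λ)` is a finite abelian group
annihilated by `4`. -/
theorem H2_natural_action_of_partition (p k : ℕ) (hp : p.Prime) (hk : 0 < k)
    (lam rho : Fin k → ℕ) (hlam : StrictAnti lam) (hlam1 : ∀ i, 1 ≤ lam i)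
    (hrho : ∀ i, 1 ≤ rho i) :
    (Odd p →
      Subsingleton (H2 (Rep.of (natRep (abelianPGroupOfPartition p k lam rho))))) ∧
    (p = 2 →
      Finite (H2 (Rep.of (natRep (abelianPGroupOfPartition p k lam rho)))) ∧
      ∀ x : H2 (Rep.of (natRep (abelianPGroupOfPartition p k lam rho))),
        (4 : ℤ) • x = 0) := by
  constructor
  · intro hodd
    have hp2 : p ≠ 2 := by
      obtain ⟨m, rfl⟩ := hodd; omega
    haveI : ∀ i : Fin k, NeZero (p ^ lam i) := fun i => ⟨pow_ne_zero _ hp.pos.ne'⟩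
    have hu : ∀ i, IsUnit (2 : ZMod (p ^ lam i)) := fun i => by
      have hc : Nat.Coprime 2 (p ^ lam i) :=
        Nat.Coprime.pow_right _ ((Nat.coprime_primes Nat.prime_two hp).2
          (fun h => hp2 h.symm))
      have := (ZMod.isUnit_iff_coprime 2 (p ^ lam i)).2 hc
      simpa using this
    set g := doublingAut p k lam rho hu with hgdef
    have hgc : ∀ h : AddAut (abelianPGroupOfPartition p k lam rho), g * h = h * g := by
      intro h
      refine DFunLike.ext _ _ fun a => ?_
      show g (h a) = h (g a)
      exact (map_add h a a).symm
    have hsurj : Function.Surjective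
        (H2π (Rep.of (natRep (abelianPGroupOfPartition p k lam rho)))) :=
      (ModuleCat.epi_iff_surjective _).1 inferInstance
    refine ⟨fun x y => ?_⟩
    suffices H : ∀ z : H2 (Rep.of (natRep (abelianPGroupOfPartition p k lam rho))), z = 0 by rw [H x, H y]
    intro z
    obtain ⟨f, rfl⟩ := hsurj z
    rw [H2π_eq_zero_iff]
    refine ⟨fun z => f.1 (g, z) - f.1 (z, g), funext fun ab => ?_⟩
    obtain ⟨a, b⟩ := ab
    rw [d₁₂_hom_apply]
    have h := central_key g hgc f a b
    refine h.trans ?_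
    show f.1 (a, b) + f.1 (a, b) - f.1 (a, b) = f.1 (a, b)
    abel
  · intro hp2
    subst hp2
    haveI : ∀ i : Fin k, NeZero (2 ^ lam i) := fun i => ⟨pow_ne_zero _ two_ne_zero⟩
    haveI : Finite (abelianPGroupOfPartition 2 k lam rho) := inferInstance
    haveI : Finite (AddAut (abelianPGroupOfPartition 2 k lam rho)) :=
      Finite.of_injective
        (fun g : AddAut (abelianPGroupOfPartition 2 k lam rho) => (g : _ → _))
        DFunLike.coe_injective
    haveI : Finite (Rep.of (natRep (abelianPGroupOfPartition 2 k lam rho))) :=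
      inferInstanceAs (Finite (abelianPGroupOfPartition 2 k lam rho))
    haveI : Finite ↥(cocycles₂ (Rep.of (natRep (abelianPGroupOfPartition 2 k lam rho)))) :=
      Subtype.finite
    have hsurj : Function.Surjective
        (H2π (Rep.of (natRep (abelianPGroupOfPartition 2 k lam rho)))) :=
      (ModuleCat.epi_iff_surjective _).1 inferInstance
    haveI : Finite (H2 (Rep.of (natRep (abelianPGroupOfPartition 2 k lam rho)))) :=
      Finite.of_surjective _ hsurj
    set g := negAut (abelianPGroupOfPartition 2 k lam rho) with hgdef
    have hgc : ∀ h : AddAut (abelianPGroupOfPartition 2 k lam rho), g * h = h * g := by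
      intro h
      refine DFunLike.ext _ _ fun a => ?_
      show g (h a) = h (g a)
      exact (map_neg h a).symm
    refine ⟨inferInstance, fun x => ?_⟩
    obtain ⟨f, rfl⟩ := hsurj x
    rw [← map_zsmul, H2π_eq_zero_iff]
    have hmem : (-2 : ℤ) • ⇑f ∈ coboundaries₂
        (Rep.of (natRep (abelianPGroupOfPartition 2 k lam rho))) := by
      refine ⟨fun z => f.1 (g, z) - f.1 (z, g), funext fun ab => ?_⟩
      obtain ⟨a, b⟩ := ab
      rw [d₁₂_hom_apply]
      have h := central_key g hgc f a b
      refine h.trans ?_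
      show -(f.1 (a, b)) - f.1 (a, b) = (-2 : ℤ) • (f.1 (a, b))
      rw [neg_smul, two_smul]; abel
    have h4 : ⇑((4 : ℤ) • f) = (-2 : ℤ) • ((-2 : ℤ) • ⇑f) := by
      rw [smul_smul]
      show (4 : ℤ) • ⇑f = ((-2 : ℤ) * -2) • ⇑f
      norm_num
    rw [h4]
    exact Submodule.smul_mem _ _ hmem
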